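/- Every bounded radial solution φ of -Δφ = (8/(1+|x|²)²)·φ on ℝ² is a constant multiple of Z_0(x) = (|x|² - 1)/(|x|² + 1). -/

import Mathlib

open Real Set

noncomputable def Zf (r : ℝ) : ℝ := (r ^ 2 - 1) / (r ^ 2 + 1)
noncomputable def Zdf (r : ℝ) : ℝ := 4 * r / (r ^ 2 + 1) ^ 2

lemma hasDerivAt_Zf (r : ℝ) : HasDerivAt Zf (Zdf r) r := by
  have h1 : HasDerivAt (fun r : ℝ => r ^ 2 - 1) (2 * r) r := by
    simpa using (hasDerivAt_pow 2 r).sub_const 1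
  have h2 : HasDerivAt (fun r : ℝ => r ^ 2 + 1) (2 * r) r := by
    simpa using (hasDerivAt_pow 2 r).add_const 1
  have hne : r ^ 2 + 1 ≠ 0 := by positivity
  have := h1.div h2 hne
  refine this.congr_deriv ?_
  unfold Zdf
  field_simp
  ring

lemma hasDerivAt_Zdf (r : ℝ) :
    HasDerivAt Zdf ((4 - 12 * r ^ 2) / (r ^ 2 + 1) ^ 3) r := by
  have h1 : HasDerivAt (fun r : ℝ => 4 * r) 4 r := by
    simpa using (hasDerivAt_id r).const_mul (4:ℝ)
  have h2 : HasDerivAt (fun r : ℝ => r ^ 2 + 1) (2 * r) r := by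
    simpa using (hasDerivAt_pow 2 r).add_const 1
  have h3 : HasDerivAt (fun r : ℝ => (r ^ 2 + 1) ^ 2) (2 * (r^2+1) ^ 1 * (2 * r)) r := h2.pow 2
  have hne : (r ^ 2 + 1) ^ 2 ≠ 0 := by positivity
  have := h1.div h3 hne
  refine this.congr_deriv ?_
  have hne2 : r ^ 2 + 1 ≠ 0 := by positivity
  field_simp
  ring

lemma const_of_hasDerivAt_zero {f : ℝ → ℝ} {s : Set ℝ} (hs : s.OrdConnected)
    (hf : ∀ x ∈ s, HasDerivAt f 0 x) {x y : ℝ} (hx : x ∈ s) (hy : y ∈ s) : f x = f y := by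
  have key : ∀ a b : ℝ, a ∈ s → b ∈ s → a ≤ b → f b = f a := by
    intro a b ha hb hab
    have hsub : Icc a b ⊆ s := hs.out ha hb
    exact constant_of_has_deriv_right_zero
      (fun t ht => (hf t (hsub ht)).continuousAt.continuousWithinAt)
      (fun t ht => (hf t (hsub (Ico_subset_Icc_self ht))).hasDerivWithinAt)
      b (right_mem_Icc.2 hab)
  rcases le_total x y with h | h
  · exact (key x y hx hy h).symm
  · exact key y x hy hx h

/-- Every bounded radial solution of `-Δφ = (8/(1+r²)²) φ` on `ℝ²` is a constant multiple of
`Z₀(r) = (r²-1)/(r²+1)` (stated for the radial profile). -/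
theorem stmt_4 (φ : ℝ → ℝ)
    (hreg : ContDiffOn ℝ 2 φ (Set.Ioi 0))
    (heq : ∀ r ∈ Set.Ioi (0 : ℝ),
      -(deriv (deriv φ) r + (1 / r) * deriv φ r) = (8 / (1 + r ^ 2) ^ 2) * φ r)
    (hbdd : ∃ M : ℝ, ∀ r ∈ Set.Ioi (0 : ℝ), |φ r| ≤ M) :
    ∃ c : ℝ, ∀ r ∈ Set.Ioi (0 : ℝ), φ r = c * ((r ^ 2 - 1) / (r ^ 2 + 1)) := by
  obtain ⟨M, hM⟩ := hbdd
  have hSopen : IsOpen (Set.Ioi (0:ℝ)) := isOpen_Ioi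
  have hφdiff : ∀ r ∈ Set.Ioi (0:ℝ), HasDerivAt φ (deriv φ r) r := fun r hr =>
    ((hreg.differentiableOn (by norm_num)).differentiableAt (hSopen.mem_nhds hr)).hasDerivAt
  have hd1 : ContDiffOn ℝ 1 (deriv φ) (Set.Ioi 0) := hreg.deriv_of_isOpen hSopen (by norm_num)
  have hφdiff2 : ∀ r ∈ Set.Ioi (0:ℝ), HasDerivAt (deriv φ) (deriv (deriv φ) r) r := fun r hr =>
    ((hd1.differentiableOn (by norm_num)).differentiableAt (hSopen.mem_nhds hr)).hasDerivAt
  have hdcont : ContinuousOn (deriv φ) (Set.Ioi 0) :=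
    hreg.continuousOn_deriv_of_isOpen hSopen (by norm_num)
  -- Step 1: the Wronskian with Zf, multiplied by r, has zero derivative on (0,∞)
  have hg : ∀ r ∈ Set.Ioi (0:ℝ),
      HasDerivAt (fun r => r * (deriv φ r * Zf r - φ r * Zdf r)) 0 r := by
    intro r hr
    have hr0 : (0:ℝ) < r := hr
    have hr' : r ≠ 0 := ne_of_gt hr0
    have h1 := ((hφdiff2 r hr).mul (hasDerivAt_Zf r)).sub ((hφdiff r hr).mul (hasDerivAt_Zdf r))
    have h2 := (hasDerivAt_id r).mul h1
    refine h2.congr_deriv ?_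
    have he := heq r hr
    have hdd : deriv (deriv φ) r = -(1/r) * deriv φ r - 8 / (1+r^2)^2 * φ r := by linarith
    rw [hdd]
    have hne : (1:ℝ) + r ^ 2 ≠ 0 := by positivity
    have hne2 : r ^ 2 + 1 ≠ 0 := by positivity
    simp only [Pi.sub_apply, Pi.mul_apply, id]
    unfold Zf Zdf
    field_simp
    ring
  -- hence r * Wronskian is a constant k
  set k : ℝ := 1 * (deriv φ 1 * Zf 1 - φ 1 * Zdf 1) with hkdef
  have hgk : ∀ r ∈ Set.Ioi (0:ℝ), r * (deriv φ r * Zf r - φ r * Zdf r) = k := by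
    intro r hr
    exact const_of_hasDerivAt_zero Set.ordConnected_Ioi hg hr (by norm_num)
  have hZpos : ∀ r : ℝ, 1 < r → 0 < Zf r := by
    intro r hr
    unfold Zf
    apply div_pos <;> nlinarith
  -- Step 2: on (1,∞), φ/Zf - k*(log r - 2/(r²-1)) has zero derivative
  have hRatioF : ∀ r ∈ Set.Ioi (1:ℝ),
      HasDerivAt (fun r => φ r / Zf r - k * (Real.log r - 2 / (r ^ 2 - 1))) 0 r := by
    intro r hr
    have hr1 : (1:ℝ) < r := hr
    have hr0 : (0:ℝ) < r := lt_trans one_pos hr1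
    have hrS : r ∈ Set.Ioi (0:ℝ) := hr0
    have hZne : Zf r ≠ 0 := (hZpos r hr1).ne'
    have hden : r ^ 2 - 1 ≠ 0 := by nlinarith
    have h1 : HasDerivAt (fun r => φ r / Zf r)
        ((deriv φ r * Zf r - φ r * Zdf r) / Zf r ^ 2) r :=
      (hφdiff r hrS).div (hasDerivAt_Zf r) hZne
    have hlog : HasDerivAt Real.log r⁻¹ r := Real.hasDerivAt_log (ne_of_gt hr0)
    have hp : HasDerivAt (fun r : ℝ => r ^ 2 - 1) (2 * r) r := by
      simpa using (hasDerivAt_pow 2 r).sub_const 1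
    have hq : HasDerivAt (fun r : ℝ => 2 / (r ^ 2 - 1))
        ((0 * (r ^ 2 - 1) - 2 * (2 * r)) / (r ^ 2 - 1) ^ 2) r :=
      (hasDerivAt_const r (2:ℝ)).div hp hden
    have hF : HasDerivAt (fun r : ℝ => Real.log r - 2 / (r ^ 2 - 1))
        (r⁻¹ - (0 * (r ^ 2 - 1) - 2 * (2 * r)) / (r ^ 2 - 1) ^ 2) r := hlog.sub hq
    have h2 := h1.sub (hF.const_mul k)
    refine h2.congr_deriv ?_
    have hw : deriv φ r * Zf r - φ r * Zdf r = k / r := by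
      rw [eq_div_iff (ne_of_gt hr0)]
      have := hgk r hrS
      linarith
    rw [hw]
    have hne2 : r ^ 2 + 1 ≠ 0 := by positivity
    unfold Zf
    field_simp
    ring
  obtain ⟨C, hC⟩ : ∃ C, ∀ r ∈ Set.Ioi (1:ℝ),
      φ r / Zf r - k * (Real.log r - 2 / (r ^ 2 - 1)) = C := by
    refine ⟨φ 2 / Zf 2 - k * (Real.log 2 - 2 / (2 ^ 2 - 1)), fun r hr => ?_⟩
    exact const_of_hasDerivAt_zero Set.ordConnected_Ioi hRatioF hr (by norm_num)
  -- Step 3: boundedness forces k = 0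
  have main : ∀ t : ℝ, 1 ≤ t → |k| * (t - 1) ≤ 2 * M + |C| := by
    intro t ht1
    obtain ⟨r, hrdef⟩ : ∃ r, r = Real.exp t := ⟨_, rfl⟩
    have hr2 : 2 ≤ r := by
      have h := Real.add_one_le_exp t
      rw [hrdef]; linarith
    have hr1 : (1:ℝ) < r := by linarith
    have hrpos : (0:ℝ) < r := by linarith
    have hZhalf : (1:ℝ)/2 ≤ Zf r := by
      unfold Zf
      rw [le_div_iff₀ (by positivity)]
      nlinarith
    have hden : (0:ℝ) < r ^ 2 - 1 := by nlinarith
    have ha0 : 0 < 2 / (r ^ 2 - 1) := div_pos two_pos hden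
    have ha1 : 2 / (r ^ 2 - 1) ≤ 1 := by
      rw [div_le_one hden]; nlinarith
    have hlogr : Real.log r = t := by rw [hrdef]; exact Real.log_exp t
    have hCr := hC r hr1
    rw [hlogr] at hCr
    have hφr : |φ r| ≤ M := hM r hrpos
    have hM0 : 0 ≤ M := le_trans (abs_nonneg _) hφr
    have hratio_bdd : |φ r / Zf r| ≤ 2 * M := by
      rw [abs_div, abs_of_pos (hZpos r hr1)]
      rw [div_le_iff₀ (hZpos r hr1)]
      nlinarith
    have hφZ : φ r / Zf r = k * (t - 2 / (r ^ 2 - 1)) + C := by linarith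
    have habs : |k * (t - 2 / (r ^ 2 - 1))| ≤ 2 * M + |C| := by
      have h1 : |k * (t - 2 / (r ^ 2 - 1))|
          ≤ |k * (t - 2 / (r ^ 2 - 1)) + C| + |C| := by
        calc |k * (t - 2 / (r ^ 2 - 1))|
            = |(k * (t - 2 / (r ^ 2 - 1)) + C) + (-C)| := by congr 1; ring
          _ ≤ |k * (t - 2 / (r ^ 2 - 1)) + C| + |(-C)| := abs_add_le _ _
          _ = |k * (t - 2 / (r ^ 2 - 1)) + C| + |C| := by rw [abs_neg]
      rw [hφZ] at hratio_bdd
      linarith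
    have hta : 0 ≤ t - 2 / (r ^ 2 - 1) := by linarith
    rw [abs_mul, abs_of_nonneg hta] at habs
    have hklb : |k| * (t - 1) ≤ |k| * (t - 2 / (r ^ 2 - 1)) := by
      apply mul_le_mul_of_nonneg_left _ (abs_nonneg k)
      linarith
    linarith
  have hk0 : k = 0 := by
    by_contra hkne
    have hkpos : 0 < |k| := abs_pos.2 hkne
    have hM0 : 0 ≤ M := le_trans (abs_nonneg _) (hM 1 (by norm_num))
    have h := main ((|k| + 2 * M + |C|) / |k| + 1) (by
      have : 0 ≤ (|k| + 2 * M + |C|) / |k| := by positivity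
      linarith)
    have h2 : |k| * ((|k| + 2 * M + |C|) / |k| + 1 - 1) = |k| + 2 * M + |C| := by
      field_simp
      ring
    rw [h2] at h
    linarith
  -- Step 4: consequences of k = 0
  have hφ1 : φ 1 = 0 := by
    have h0 : Zf 1 = 0 := by norm_num [Zf]
    have h1 : Zdf 1 = 1 := by norm_num [Zdf]
    rw [h0, h1, hk0] at hkdef
    simpa using hkdef.symm
  have hW0 : ∀ r ∈ Set.Ioi (0:ℝ), deriv φ r * Zf r - φ r * Zdf r = 0 := by
    intro r hr
    have h := hgk r hr
    rw [hk0] at h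
    rcases mul_eq_zero.1 h with h' | h'
    · exact absurd h' (ne_of_gt hr)
    · exact h'
  have hZneg : ∀ r : ℝ, 0 < r → r < 1 → Zf r < 0 := by
    intro r h0 h1
    unfold Zf
    apply div_neg_of_neg_of_pos <;> nlinarith
  have hRatio : ∀ r ∈ Set.Ioi (0:ℝ), Zf r ≠ 0 → HasDerivAt (fun r => φ r / Zf r) 0 r := by
    intro r hr hZne
    have h1 : HasDerivAt (fun r => φ r / Zf r)
        ((deriv φ r * Zf r - φ r * Zdf r) / Zf r ^ 2) r :=
      (hφdiff r hr).div (hasDerivAt_Zf r) hZne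
    rw [hW0 r hr, zero_div] at h1
    exact h1
  obtain ⟨Cp, hCp⟩ : ∃ Cp, ∀ r ∈ Set.Ioi (1:ℝ), φ r = Cp * Zf r := by
    refine ⟨φ 2 / Zf 2, fun r hr => ?_⟩
    have hr1 : (1:ℝ) < r := hr
    have h : φ r / Zf r = φ 2 / Zf 2 := const_of_hasDerivAt_zero Set.ordConnected_Ioi
      (fun x hx => hRatio x (lt_trans one_pos hx : (0:ℝ) < x) (hZpos x hx).ne') hr
      (show (2:ℝ) ∈ Set.Ioi 1 by norm_num)
    exact (div_eq_iff (hZpos r hr1).ne').1 h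
  obtain ⟨Cm, hCm⟩ : ∃ Cm, ∀ r ∈ Set.Ioo (0:ℝ) 1, φ r = Cm * Zf r := by
    refine ⟨φ (1/2) / Zf (1/2), fun r hr => ?_⟩
    have h : φ r / Zf r = φ (1/2) / Zf (1/2) := const_of_hasDerivAt_zero Set.ordConnected_Ioo
      (fun x hx => hRatio x hx.1 (hZneg x hx.1 hx.2).ne) hr
      (show (1/2:ℝ) ∈ Set.Ioo (0:ℝ) 1 by norm_num)
    exact (div_eq_iff (hZneg r hr.1 hr.2).ne).1 h
  -- Step 5: match the constants using continuity of deriv φ at 1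
  have hDp : ∀ r ∈ Set.Ioi (1:ℝ), deriv φ r = Cp * Zdf r := by
    intro r hr
    have hev : φ =ᶠ[nhds r] fun x => Cp * Zf x := by
      filter_upwards [isOpen_Ioi.mem_nhds hr] with x hx
      exact hCp x hx
    rw [hev.deriv_eq]
    exact ((hasDerivAt_Zf r).const_mul Cp).deriv
  have hDm : ∀ r ∈ Set.Ioo (0:ℝ) 1, deriv φ r = Cm * Zdf r := by
    intro r hr
    have hev : φ =ᶠ[nhds r] fun x => Cm * Zf x := by
      filter_upwards [isOpen_Ioo.mem_nhds hr] with x hx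
      exact hCm x hx
    rw [hev.deriv_eq]
    exact ((hasDerivAt_Zf r).const_mul Cm).deriv
  have hZdcont : Continuous Zdf := by
    unfold Zdf
    exact (continuous_const.mul continuous_id).div
      (((continuous_pow 2).add continuous_const).pow 2) (fun x => by positivity)
  have hZd1 : Zdf 1 = 1 := by norm_num [Zdf]
  have hd1cont : ContinuousWithinAt (deriv φ) (Set.Ioi 0) 1 := hdcont 1 (by norm_num)
  have hCp_eq : Cp = deriv φ 1 := by
    have hA : Filter.Tendsto (deriv φ) (nhdsWithin 1 (Set.Ioi 1)) (nhds (deriv φ 1)) :=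
      (hd1cont.mono (fun x (hx : x ∈ Set.Ioi (1:ℝ)) => (lt_trans one_pos hx : (0:ℝ) < x))).tendsto
    have hB : Filter.Tendsto (fun r => Cp * Zdf r) (nhdsWithin 1 (Set.Ioi 1))
        (nhds (Cp * Zdf 1)) :=
      ((hZdcont.continuousAt.const_smul Cp).tendsto.mono_left nhdsWithin_le_nhds)
    have hAB : Filter.Tendsto (deriv φ) (nhdsWithin 1 (Set.Ioi 1)) (nhds (Cp * Zdf 1)) := by
      refine hB.congr' ?_
      filter_upwards [self_mem_nhdsWithin] with x hx
      exact (hDp x hx).symm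
    have := tendsto_nhds_unique hAB hA
    rw [hZd1, mul_one] at this
    exact this
  have hCm_eq : Cm = deriv φ 1 := by
    haveI : (nhdsWithin (1:ℝ) (Set.Ioo (0:ℝ) 1)).NeBot :=
      right_nhdsWithin_Ioo_neBot one_pos
    have hA : Filter.Tendsto (deriv φ) (nhdsWithin 1 (Set.Ioo (0:ℝ) 1)) (nhds (deriv φ 1)) :=
      (hd1cont.mono (fun x hx => hx.1)).tendsto
    have hB : Filter.Tendsto (fun r => Cm * Zdf r) (nhdsWithin 1 (Set.Ioo (0:ℝ) 1))
        (nhds (Cm * Zdf 1)) :=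
      ((hZdcont.continuousAt.const_smul Cm).tendsto.mono_left nhdsWithin_le_nhds)
    have hAB : Filter.Tendsto (deriv φ) (nhdsWithin 1 (Set.Ioo (0:ℝ) 1))
        (nhds (Cm * Zdf 1)) := by
      refine hB.congr' ?_
      filter_upwards [self_mem_nhdsWithin] with x hx
      exact (hDm x hx).symm
    have := tendsto_nhds_unique hAB hA
    rw [hZd1, mul_one] at this
    exact this
  refine ⟨deriv φ 1, fun r hr => ?_⟩
  have hrpos : (0:ℝ) < r := hr
  rcases lt_trichotomy r 1 with h | h | h
  · have := hCm r ⟨hrpos, h⟩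
    rw [hCm_eq] at this
    simpa [Zf] using this
  · subst h
    norm_num [hφ1]
  · have := hCp r h
    rw [hCp_eq] at this
    simpa [Zf] using this
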